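/- Fix constants c > 0, Λ > 0, κ > 0 and α, β, γ ∈ ℝ with α ≠ 0. Define B(t,r) = α·cos(c√Λ·r) + β·e^{c√Λ·t} + γ·e^{−c√Λ·t}, C(r) = sin(c√Λ·r)/√Λ, and μ(t,r) = 2αΛ·cos(c√Λ·r)/(κ·B(t,r)). Then at every point (t,r) with B(t,r) ≠ 0 and C(r) ≠ 0 the five reduced Einstein field equations hold: (E1) −∂ᵣᵣB/B − C''/C − (∂ᵣB/B)(C'/C) = κμc² + c²Λ; (E2) ∂ₜ∂ᵣB = 0; (E3) ∂ₜₜB/B − (∂ᵣB/B)(C'/C) = c²Λ; (E4) −C''/C = c²Λ; (E5) (∂ₜₜB − ∂ᵣᵣB)/B = c²Λ. Moreover the regular-axis conditions hold: C(0) = 0 and C'(0)² = c². -/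

import Mathlib

/-- For `Λ > 0`, the functions `B(t,r) = α·cos(c√Λ·r) + β·e^{c√Λ·t} + γ·e^{−c√Λ·t}`,
`C(r) = sin(c√Λ·r)/√Λ` and `μ(t,r) = 2αΛ·cos(c√Λ·r)/(κ·B(t,r))` satisfy the five
reduced Einstein field equations (E1)–(E5) of cylindrically symmetric `Λ`-dust with
constant lapse `c`, together with the regular-axis conditions `C(0) = 0`, `C'(0)² = c²`. -/
theorem new_solution_positive_Lambda
    (c Λ κ α β γ : ℝ) (hc : 0 < c) (hΛ : 0 < Λ) (hκ : 0 < κ) (hα : α ≠ 0)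
    (B : ℝ → ℝ → ℝ) (C : ℝ → ℝ) (μ : ℝ → ℝ → ℝ)
    (hB : ∀ t r, B t r =
      α * Real.cos (c * Real.sqrt Λ * r) + β * Real.exp (c * Real.sqrt Λ * t)
        + γ * Real.exp (-(c * Real.sqrt Λ * t)))
    (hC : ∀ r, C r = Real.sin (c * Real.sqrt Λ * r) / Real.sqrt Λ)
    (hμ : ∀ t r, μ t r = 2 * α * Λ * Real.cos (c * Real.sqrt Λ * r) / (κ * B t r)) :
    (∀ t r : ℝ, B t r ≠ 0 → C r ≠ 0 →
      -- (E1)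
      (-(deriv (deriv (fun s => B t s)) r) / B t r
          - deriv (deriv C) r / C r
          - (deriv (fun s => B t s) r / B t r) * (deriv C r / C r)
          = κ * μ t r * c ^ 2 + c ^ 2 * Λ) ∧
      -- (E2)
      (deriv (fun s => deriv (fun x => B s x) r) t = 0) ∧
      -- (E3)
      (deriv (deriv (fun s => B s r)) t / B t r
          - (deriv (fun s => B t s) r / B t r) * (deriv C r / C r) = c ^ 2 * Λ) ∧
      -- (E4)
      (-(deriv (deriv C) r) / C r = c ^ 2 * Λ) ∧
      -- (E5)
      ((deriv (deriv (fun s => B s r)) t - deriv (deriv (fun s => B t s)) r) / B t r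
          = c ^ 2 * Λ)) ∧
    C 0 = 0 ∧ (deriv C 0) ^ 2 = c ^ 2 := by
  have hs : (0:ℝ) < Real.sqrt Λ := Real.sqrt_pos.mpr hΛ
  have hsq : Real.sqrt Λ ^ 2 = Λ := Real.sq_sqrt hΛ.le
  obtain ⟨k, hk⟩ : ∃ k : ℝ, c * Real.sqrt Λ = k := ⟨_, rfl⟩
  simp only [hk] at hB hC hμ
  have hk0 : k ≠ 0 := by rw [← hk]; exact (mul_pos hc hs).ne'
  have hsΛ : Real.sqrt Λ = k / c := by rw [← hk]; field_simp
  have hΛeq : Λ = k ^ 2 / c ^ 2 := by rw [← hsq, hsΛ, div_pow]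
  have hlin : ∀ x : ℝ, HasDerivAt (fun s : ℝ => k * s) k x := by
    intro x; simpa using (hasDerivAt_id x).const_mul k
  -- spatial derivatives of B
  have hB1 : ∀ t, deriv (fun s => B t s) = fun r => α * (-Real.sin (k * r) * k) := by
    intro t; funext r
    have hfun : (fun s => B t s) = fun s =>
        α * Real.cos (k * s) + (β * Real.exp (k * t) + γ * Real.exp (-(k * t))) := by
      funext s; rw [hB]; ring
    rw [hfun]
    exact ((((Real.hasDerivAt_cos (k*r)).comp r (hlin r)).const_mul α).add_const _).deriv
  have hB2 : ∀ t r, deriv (deriv (fun s => B t s)) r = α * (-(Real.cos (k * r) * k) * k) := by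
    intro t r
    rw [hB1 t]
    have hsin : HasDerivAt (fun s => Real.sin (k*s)) (Real.cos (k*r) * k) r :=
      (Real.hasDerivAt_sin (k*r)).comp r (hlin r)
    exact (((hsin.neg).mul_const k).const_mul α).deriv
  -- time derivatives of B
  have hBt1 : ∀ r, deriv (fun s => B s r)
      = fun t => β * (Real.exp (k*t) * k) + γ * (Real.exp (-(k*t)) * -k) := by
    intro r; funext t
    have hfun : (fun s => B s r) = fun s =>
        β * Real.exp (k * s) + γ * Real.exp (-(k * s)) + α * Real.cos (k * r) := by
      funext s; rw [hB]; ring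
    rw [hfun]
    have h1 : HasDerivAt (fun s => Real.exp (k*s)) (Real.exp (k*t) * k) t :=
      (Real.hasDerivAt_exp (k*t)).comp t (hlin t)
    have h2 : HasDerivAt (fun s => Real.exp (-(k*s))) (Real.exp (-(k*t)) * -k) t :=
      by
        have hn : HasDerivAt (fun s => -(k*s)) (-k) t := (hlin t).neg
        exact (Real.hasDerivAt_exp (-(k*t))).comp t hn
    exact (((h1.const_mul β).add (h2.const_mul γ)).add_const _).deriv
  have hBt2 : ∀ t r, deriv (deriv (fun s => B s r)) t
      = β * (Real.exp (k*t) * k * k) + γ * (Real.exp (-(k*t)) * -k * -k) := by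
    intro t r
    rw [hBt1 r]
    have h1 : HasDerivAt (fun s => Real.exp (k*s)) (Real.exp (k*t) * k) t :=
      (Real.hasDerivAt_exp (k*t)).comp t (hlin t)
    have h2 : HasDerivAt (fun s => Real.exp (-(k*s))) (Real.exp (-(k*t)) * -k) t :=
      by
        have hn : HasDerivAt (fun s => -(k*s)) (-k) t := (hlin t).neg
        exact (Real.hasDerivAt_exp (-(k*t))).comp t hn
    exact (((h1.mul_const k).const_mul β).add ((h2.mul_const (-k)).const_mul γ)).deriv
  -- derivatives of C
  have hCfun : C = fun r => Real.sin (k*r) * (Real.sqrt Λ)⁻¹ := by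
    funext r; rw [hC, div_eq_mul_inv]
  have hC1 : deriv C = fun r => Real.cos (k*r) * k * (Real.sqrt Λ)⁻¹ := by
    funext r; rw [hCfun]
    exact (((Real.hasDerivAt_sin (k*r)).comp r (hlin r)).mul_const _).deriv
  have hC2 : ∀ r, deriv (deriv C) r = -Real.sin (k*r) * k * k * (Real.sqrt Λ)⁻¹ := by
    intro r; rw [hC1]
    exact ((((Real.hasDerivAt_cos (k*r)).comp r (hlin r)).mul_const k).mul_const _).deriv
  refine ⟨?_, ?_, ?_⟩
  · intro t r hBne hCne
    have hsin : Real.sin (k*r) ≠ 0 := by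
      intro h; apply hCne; rw [hC, h]; simp
    rw [hB] at hBne
    refine ⟨?_, ?_, ?_, ?_, ?_⟩
    · rw [hB2, hC2, hC1, hB1, hμ, hC, hB, hsΛ, hΛeq]
      field_simp
      ring
    · have : (fun s => deriv (fun x => B s x) r) = fun _ => α * (-Real.sin (k * r) * k) := by
        funext s; exact congrFun (hB1 s) r
      rw [this]; exact deriv_const t _
    · rw [hBt2, hB1, hC1, hC, hB, hsΛ, hΛeq]
      field_simp
      ring
    · rw [hC2, hC, hsΛ, hΛeq]
      field_simp
    · rw [hBt2, hB2, hB, hΛeq]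
      field_simp
      ring
  · rw [hC]; simp
  · rw [hC1]
    simp only [mul_zero, Real.cos_zero, one_mul, hsΛ]
    field_simp
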